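/- arXiv:2011.12140 — 5 statements merged into one kernel-verified Lean document; each statement's English description precedes it below -/
import Mathlib

section
/- For every complex number z, 1/Γ(z) = z · e^{γ z} · ∏_{n=1}^∞ (1 + z/n) e^{-z/n}, where the infinite product converges. -/
open Filter Topology Finset

lemma hasProd_zero_of_eq_zero {f : ℕ → ℂ} (i : ℕ) (h : f i = 0) : HasProd f 0 := by
  have : ∀ᶠ s : Finset ℕ in atTop, ∏ b ∈ s, f b = 0 := by
    filter_upwards [eventually_ge_atTop {i}] with s hs
    exact Finset.prod_eq_zero (hs (Finset.mem_singleton_self i)) h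
  exact Tendsto.congr' (this.mono fun s hs => hs.symm) tendsto_const_nhds

lemma gfact_bound (z : ℂ) : ∀ᶠ n : ℕ in atTop,
    ‖Complex.log ((1 + z / (n + 1)) * Complex.exp (-z / (n + 1)))‖ ≤ 4 * ‖z‖ ^ 2 * ((n : ℝ) + 1)⁻¹ ^ 2 := by
  have h4 : ∀ᶠ n : ℕ in atTop, ‖z‖ ≤ ((n : ℝ) + 1) / 4 := by
    have := tendsto_natCast_atTop_atTop (R := ℝ)
    filter_upwards [this.eventually_ge_atTop (4 * ‖z‖)] with n hn
    rw [le_div_iff₀ (by norm_num)]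
    nlinarith
  filter_upwards [h4] with n hn
  set w : ℂ := z / (n + 1) with hw
  have hn1 : (0:ℝ) < (n:ℝ) + 1 := by positivity
  have hwnorm : ‖w‖ ≤ 1 / 4 := by
    rw [hw, norm_div]
    have : ‖((n : ℂ) + 1)‖ = (n : ℝ) + 1 := by
      norm_cast
    rw [this, div_le_div_iff₀ hn1 (by norm_num)]
    nlinarith
  have hwn : ‖w‖ = ‖z‖ * ((n:ℝ)+1)⁻¹ := by
    rw [hw, norm_div]
    congr 1
    · norm_cast
  -- exp(-w) = 1 - w + r with ‖r‖ ≤ ‖w‖^2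
  have hr : ‖Complex.exp (-w) - 1 - (-w)‖ ≤ ‖w‖ ^ 2 := by
    have h1 : ‖-w‖ ≤ 1 := by rw [norm_neg]; exact hwnorm.trans (by norm_num)
    have := Complex.norm_exp_sub_one_sub_id_le (x := -w) (by simpa using h1)
    simpa using this
  set r : ℂ := Complex.exp (-w) - 1 + w with hrdef
  have hrr : ‖r‖ ≤ ‖w‖ ^ 2 := by
    have : r = Complex.exp (-w) - 1 - (-w) := by ring
    rw [this]; exact hr
  have hd : (1 + w) * Complex.exp (-w) - 1 = -w^2 + (1 + w) * r := by
    have : Complex.exp (-w) = 1 - w + r := by rw [hrdef]; ring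
    rw [this]; ring
  have hdnorm : ‖(1 + w) * Complex.exp (-w) - 1‖ ≤ (5/2) * ‖w‖ ^ 2 := by
    rw [hd]
    calc ‖-w^2 + (1 + w) * r‖ ≤ ‖-w^2‖ + ‖(1+w) * r‖ := norm_add_le _ _
      _ ≤ ‖w‖^2 + (1 + ‖w‖) * ‖w‖^2 := by
          rw [norm_neg, norm_pow, norm_mul]
          gcongr <;> first
            | exact (norm_add_le _ _).trans (by simp)
            | exact hrr
      _ ≤ (5/2) * ‖w‖^2 := by nlinarith [norm_nonneg w]
  have hdhalf : ‖(1 + w) * Complex.exp (-w) - 1‖ ≤ 1/2 := by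
    refine hdnorm.trans ?_
    nlinarith [norm_nonneg w]
  have hlog := Complex.norm_log_one_add_half_le_self (z := (1 + w) * Complex.exp (-w) - 1) hdhalf
  have key : (1 : ℂ) + ((1 + w) * Complex.exp (-w) - 1) = (1 + w) * Complex.exp (-w) := by ring
  rw [key] at hlog
  calc ‖Complex.log ((1 + z/(n+1)) * Complex.exp (-z/(n+1)))‖
      = ‖Complex.log ((1 + w) * Complex.exp (-w))‖ := by rw [hw, neg_div]
    _ ≤ (3/2) * ‖(1 + w) * Complex.exp (-w) - 1‖ := hlog
    _ ≤ (3/2) * ((5/2) * ‖w‖^2) := by gcongr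
    _ ≤ 4 * ‖w‖^2 := by nlinarith [norm_nonneg w]
    _ = 4 * ‖z‖^2 * ((n:ℝ)+1)⁻¹^2 := by rw [hwn]; ring

lemma summable_log_gfact (z : ℂ) :
    Summable (fun n : ℕ => Complex.log ((1 + z / (n + 1)) * Complex.exp (-z / (n + 1)))) := by
  apply Summable.of_norm_bounded_eventually_nat
    (g := fun n => 4 * ‖z‖ ^ 2 * ((n : ℝ) + 1)⁻¹ ^ 2)
  · apply Summable.mul_left
    have : Summable (fun n : ℕ => ((n : ℝ))⁻¹ ^ 2) := by
      simpa [div_eq_mul_inv, inv_pow] using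
        (Real.summable_one_div_nat_pow (p := 2)).mpr one_lt_two
    have := (summable_nat_add_iff 1).mpr this
    simpa [inv_pow] using this
  · exact (gfact_bound z).mono fun n hn => hn

theorem weierstrass_product_Gamma (z : ℂ) :
    ∃ p : ℂ, HasProd (fun n : ℕ => (1 + z / (n + 1)) * Complex.exp (-z / (n + 1))) p ∧
      (Complex.Gamma z)⁻¹ =
        z * Complex.exp ((Real.eulerMascheroniConstant : ℂ) * z) * p := by
  by_cases hz : ∃ m : ℕ, z = -m
  · obtain ⟨m, rfl⟩ := hz
    rcases Nat.eq_zero_or_pos m with hm | hm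
    · subst hm
      refine ⟨1, ?_, ?_⟩
      · have : (fun n : ℕ => (1 + (-(0:ℕ):ℂ) / (n + 1)) * Complex.exp (-(-(0:ℕ):ℂ) / (n + 1)))
            = fun _ => 1 := by
          funext n; simp
        rw [this]; exact hasProd_one
      · simp [Complex.Gamma_zero]
    · refine ⟨0, ?_, ?_⟩
      · apply hasProd_zero_of_eq_zero (m - 1)
        have h1 : ((m - 1 : ℕ) : ℂ) + 1 = (m : ℂ) := by
          have : (m - 1) + 1 = m := Nat.succ_pred_eq_of_pos hm
          exact_mod_cast congrArg (Nat.cast : ℕ → ℂ) this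
        have hm0 : (m : ℂ) ≠ 0 := Nat.cast_ne_zero.mpr hm.ne'
        rw [h1]
        field_simp
        simp
      · rw [Complex.Gamma_neg_nat_eq_zero]
        simp
  · push_neg at hz
    set γ : ℝ := Real.eulerMascheroniConstant
    set g : ℕ → ℂ := fun n => (1 + z / (n + 1)) * Complex.exp (-z / (n + 1)) with hgdef
    have hne1 : ∀ k : ℕ, (1 : ℂ) + z / (k + 1) ≠ 0 := by
      intro k hk
      apply hz (k + 1)
      have hk1 : ((k : ℂ) + 1) ≠ 0 := Nat.cast_add_one_ne_zero k
      field_simp at hk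
      push_cast
      linear_combination hk
    have hne : ∀ n, g n ≠ 0 := fun n =>
      mul_ne_zero (hne1 n) (Complex.exp_ne_zero _)
    -- Multipliable
    have hsum := summable_log_gfact z
    have hg : HasProd g (∏' n, g n) := by
      have := (Complex.hasProd_of_hasSum_log hne hsum.hasSum).multipliable.hasProd
      exact this
    refine ⟨∏' n, g n, hg, ?_⟩
    have htp : Tendsto (fun n => ∏ k ∈ range n, g k) atTop (𝓝 (∏' n, g n)) :=
      hg.tendsto_prod_nat
    -- limit of the correction factor
    set c : ℕ → ℝ := fun n => γ - (harmonic n : ℝ) + Real.log n with hc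
    have hc0 : Tendsto c atTop (𝓝 0) := by
      have h1 := Real.tendsto_harmonic_sub_log
      have := (tendsto_const_nhds (x := γ) (f := atTop)).sub h1
      rw [sub_self] at this
      apply this.congr
      intro n; simp [hc]; ring
    have hexp : Tendsto (fun n => Complex.exp ((c n : ℂ) * z)) atTop (𝓝 1) := by
      have h1 : Tendsto (fun n => ((c n : ℂ)) * z) atTop (𝓝 0) := by
        have := ((Complex.continuous_ofReal.tendsto 0).comp hc0).mul_const z
        simpa using this
      have := (Complex.continuous_exp.tendsto 0).comp h1
      simpa [Function.comp_def] using this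
    have hA : Tendsto (fun n => (Complex.GammaSeq z n)⁻¹) atTop (𝓝 ((Complex.Gamma z)⁻¹)) :=
      (Complex.GammaSeq_tendsto_Gamma z).inv₀ (Complex.Gamma_ne_zero hz)
    -- the key identity
    have heq : ∀ᶠ n in atTop,
        z * Complex.exp ((γ : ℂ) * z) * ∏ k ∈ range n, g k
          = (Complex.GammaSeq z n)⁻¹ * Complex.exp ((c n : ℂ) * z) := by
      filter_upwards [eventually_ge_atTop 1] with n hn
      have hfact : ((n.factorial : ℕ) : ℂ) ≠ 0 := Nat.cast_ne_zero.mpr n.factorial_ne_zero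
      have hnn : ((n : ℝ)) ≠ 0 := Nat.cast_ne_zero.mpr (by omega)
      have hprodden : (∏ k ∈ range n, ((k : ℂ) + 1)) = ((n.factorial : ℕ) : ℂ) := by
        exact_mod_cast congrArg (fun m : ℕ => (m : ℂ)) (Finset.prod_range_add_one_eq_factorial n)
      have hprod : ∏ k ∈ range n, g k
          = (∏ k ∈ range n, (z + ((k : ℂ) + 1))) / ((n.factorial : ℕ) : ℂ)
              * Complex.exp (-((harmonic n : ℝ) : ℂ) * z) := by
        rw [hgdef, Finset.prod_mul_distrib, ← Complex.exp_sum]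
        congr 1
        · rw [← hprodden, ← Finset.prod_div_distrib]
          apply Finset.prod_congr rfl
          intro k _
          have : ((k : ℂ) + 1) ≠ 0 := Nat.cast_add_one_ne_zero k
          field_simp
          ring
        · congr 1
          have : ((harmonic n : ℝ) : ℂ) = ∑ k ∈ range n, ((k : ℂ) + 1)⁻¹ := by
            push_cast [harmonic]
            norm_num
          rw [this, neg_mul, Finset.sum_mul, ← Finset.sum_neg_distrib]
          apply Finset.sum_congr rfl
          intro k _
          ring
      have hGS : (Complex.GammaSeq z n)⁻¹
          = z * (∏ k ∈ range n, (z + ((k : ℂ) + 1))) / ((n : ℂ) ^ z * ((n.factorial : ℕ) : ℂ)) := by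
        rw [Complex.GammaSeq, inv_div]
        congr 1
        rw [Finset.prod_range_succ']
        push_cast
        ring
      have hcpow : (n : ℂ) ^ z = Complex.exp ((Real.log n : ℂ) * z) := by
        rw [Complex.cpow_def_of_ne_zero (by exact_mod_cast hnn)]
        congr 2
        rw [← Complex.ofReal_natCast, Complex.ofReal_log (Nat.cast_nonneg n)]
      have hsplit : ((c n : ℂ)) * z
          = (γ : ℂ) * z + (-((harmonic n : ℝ) : ℂ) * z) + ((Real.log n : ℂ)) * z := by
        simp only [hc]
        push_cast
        ring
      rw [hprod, hGS, hcpow, hsplit, Complex.exp_add, Complex.exp_add]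
      field_simp
    -- conclude by uniqueness of limits
    have hT1 : Tendsto (fun n => z * Complex.exp ((γ : ℂ) * z) * ∏ k ∈ range n, g k)
        atTop (𝓝 (z * Complex.exp ((γ : ℂ) * z) * ∏' n, g n)) :=
      htp.const_mul _
    have hT2 : Tendsto (fun n => (Complex.GammaSeq z n)⁻¹ * Complex.exp ((c n : ℂ) * z))
        atTop (𝓝 ((Complex.Gamma z)⁻¹ * 1)) := hA.mul hexp
    rw [mul_one] at hT2
    exact (tendsto_nhds_unique (hT1.congr' heq) hT2).symm
end

section
/- (Wielandt) Let f be holomorphic on the right half-plane {z : Re z > 0}, bounded on the strip {z : 1 ≤ Re z ≤ 2}, satisfying f(z+1) = z f(z) for all z with Re z > 0 and f(1) = 1. Then f(z) = Γ(z) for all z with Re z > 0. -/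
open Complex Set Filter Topology MeasureTheory

-- extension step lemma
lemma wielandt_step (n : ℕ) (g : ℂ → ℂ)
    (hg : DifferentiableOn ℂ g {z : ℂ | -(n:ℝ) < z.re})
    (hrec : ∀ z : ℂ, -(n:ℝ) < z.re → g (z+1) = z * g z)
    (h1 : g 1 = 0) :
    ∃ G : ℂ → ℂ, DifferentiableOn ℂ G {z : ℂ | -((n:ℝ)+1) < z.re} ∧
      (∀ z : ℂ, -((n:ℝ)+1) < z.re → G (z+1) = z * G z) ∧
      (∀ z : ℂ, -(n:ℝ) < z.re → G z = g z) := by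
  set h : ℂ → ℂ := fun z => g (z+1) with hh
  set G : ℂ → ℂ := dslope h 0 with hG
  have hSopen : ∀ a : ℝ, IsOpen {z : ℂ | a < z.re} := fun a =>
    isOpen_lt continuous_const Complex.continuous_re
  have hdom : ∀ z : ℂ, -((n:ℝ)+1) < z.re → -(n:ℝ) < (z+1).re := by
    intro z hz; simp only [Complex.add_re, Complex.one_re]; linarith
  -- h is differentiable on the bigger domain
  have hhd : DifferentiableOn ℂ h {z : ℂ | -((n:ℝ)+1) < z.re} := by
    apply DifferentiableOn.comp (t := {z : ℂ | -(n:ℝ) < z.re}) hg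
    · exact (differentiable_id.add_const 1).differentiableOn
    · intro z hz; exact hdom z hz
  -- value of G away from 0
  have hne : ∀ z : ℂ, z ≠ 0 → G z = g (z+1) / z := by
    intro z hz
    rw [hG, dslope_of_ne h hz, slope_def_field]
    simp [hh, h1]
  -- G = g on the old domain
  have hGg : ∀ z : ℂ, -(n:ℝ) < z.re → G z = g z := by
    intro z hz
    rcases eq_or_ne z 0 with rfl | hz0
    · have hn0 : -(n:ℝ) < 0 := by simpa using hz
      have hmem : {z : ℂ | -(n:ℝ) < z.re} ∈ 𝓝 (0:ℂ) :=
        (hSopen _).mem_nhds (by simp only [mem_setOf_eq, Complex.zero_re]; exact hn0)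
      have heq : h =ᶠ[𝓝 (0:ℂ)] fun z => z * g z := by
        filter_upwards [hmem] with w hw
        exact hrec w hw
      have hder : HasDerivAt (fun z : ℂ => z * g z) ((1:ℂ) * g 0 + 0 * deriv g 0) 0 := by
        exact (hasDerivAt_id 0).mul ((hg.differentiableAt hmem).hasDerivAt)
      have : G 0 = deriv h 0 := dslope_same h 0
      rw [this, heq.deriv_eq, hder.deriv]
      simp
    · rw [hne z hz0, hrec z hz, mul_comm, mul_div_assoc, div_self hz0, mul_one]
  refine ⟨G, ?_, ?_, hGg⟩
  · -- differentiability
    intro z hz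
    rcases eq_or_ne z 0 with rfl | hz0
    · -- at 0 use power series of h
      have hmem : {z : ℂ | -((n:ℝ)+1) < z.re} ∈ 𝓝 (0:ℂ) := by
        apply (hSopen _).mem_nhds
        simp only [mem_setOf_eq, Complex.zero_re]
        have := n.cast_nonneg (α:=ℝ); linarith
      have han : AnalyticAt ℂ h 0 := hhd.analyticAt hmem
      obtain ⟨p, hp⟩ := han
      exact (hp.has_fpower_series_dslope_fslope.analyticAt).differentiableAt.differentiableWithinAt
    · -- away from 0
      have hmem : {w : ℂ | -((n:ℝ)+1) < w.re ∧ w ≠ 0} ∈ 𝓝 z :=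
        (IsOpen.mem_nhds ((hSopen _).inter (isOpen_ne)) ⟨hz, hz0⟩)
      have : DifferentiableAt ℂ (fun w => g (w+1) / w) z := by
        apply DifferentiableAt.div
        · exact (hhd.differentiableAt ((hSopen _).mem_nhds hz))
        · exact differentiableAt_id
        · exact hz0
      exact (this.congr_of_eventuallyEq
        (by filter_upwards [hmem] with w hw; exact hne w hw.2)).differentiableWithinAt
  · -- recurrence
    intro z hz
    rcases eq_or_ne z 0 with rfl | hz0
    · have : G 1 = g 1 := hGg 1 (by simp only [mem_setOf_eq, Complex.one_re]; have := n.cast_nonneg (α:=ℝ); linarith)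
      simp [this, h1]
    · rcases eq_or_ne z (-1) with rfl | hz1
      · have hre0 : -(n:ℝ) < (0:ℂ).re := by
          simpa using (by simpa using hz : -((n:ℝ)+1) < -1)
        have e0 : G ((-1:ℂ)+1) = g 0 := by
          rw [show ((-1:ℂ)+1) = 0 by ring]; exact hGg 0 hre0
        have e1 : G (-1 : ℂ) = g 0 / (-1) := by
          rw [hne (-1) (by norm_num)]; norm_num
        rw [e0, e1]; field_simp
      · have hz1' : z + 1 ≠ 0 := by
          intro hcon; apply hz1; linear_combination hcon
        rw [hne (z+1) hz1', hne z hz0, hrec (z+1) (hdom z hz)]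
        field_simp

lemma wielandt_gamma_norm_le {z : ℂ} (hz : 0 < z.re) :
    ‖Complex.Gamma z‖ ≤ Real.Gamma z.re := by
  rw [Complex.Gamma_eq_integral hz, Complex.GammaIntegral]
  calc ‖∫ x in Ioi (0:ℝ), (Real.exp (-x) : ℂ) * (x:ℂ) ^ (z - 1)‖
      ≤ ∫ x in Ioi (0:ℝ), ‖(Real.exp (-x) : ℂ) * (x:ℂ) ^ (z - 1)‖ :=
        norm_integral_le_integral_norm _
    _ = ∫ x in Ioi (0:ℝ), Real.exp (-x) * x ^ (z.re - 1) := by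
        apply setIntegral_congr_fun measurableSet_Ioi
        intro x hx
        simp only []
        rw [norm_mul,
          Complex.norm_cpow_eq_rpow_re_of_pos hx, Complex.norm_real, Real.norm_eq_abs,
          _root_.abs_of_nonneg (Real.exp_pos _).le, Complex.sub_re, Complex.one_re]
    _ = Real.Gamma z.re := (Real.Gamma_eq_integral hz).symm

lemma wielandt_gamma_strip : ∃ B : ℝ, ∀ z : ℂ, 1 ≤ z.re → z.re ≤ 2 → ‖Complex.Gamma z‖ ≤ B := by
  have hcont : ContinuousOn Real.Gamma (Icc (1:ℝ) 2) := by
    intro x hx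
    have : ∀ m : ℕ, x ≠ -m := by
      intro m
      have : (0:ℝ) < x := lt_of_lt_of_le one_pos hx.1
      have hm : -(m:ℝ) ≤ 0 := neg_nonpos.mpr m.cast_nonneg
      intro h; rw [h] at this; linarith
    exact (Real.differentiableAt_Gamma this).continuousAt.continuousWithinAt
  obtain ⟨B, hB⟩ := isCompact_Icc.exists_bound_of_continuousOn hcont
  refine ⟨B, fun z h1 h2 => ?_⟩
  have h0 : 0 < z.re := lt_of_lt_of_le one_pos h1
  calc ‖Complex.Gamma z‖ ≤ Real.Gamma z.re := wielandt_gamma_norm_le h0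
    _ ≤ ‖Real.Gamma z.re‖ := le_abs_self _
    _ ≤ B := hB z.re ⟨h1, h2⟩

lemma wielandt_family (Δ : ℂ → ℂ) (hΔd : DifferentiableOn ℂ Δ {z : ℂ | 0 < z.re})
    (hΔrec : ∀ z : ℂ, 0 < z.re → Δ (z+1) = z * Δ z) (hΔ1 : Δ 1 = 0) :
    ∃ D : ℂ → ℂ, Differentiable ℂ D ∧ (∀ z : ℂ, D (z+1) = z * D z) ∧
      (∀ z : ℂ, 0 < z.re → D z = Δ z) := by
  have hGood : ∀ n : ℕ, ∃ g : ℂ → ℂ, DifferentiableOn ℂ g {z : ℂ | -(n:ℝ) < z.re} ∧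
      (∀ z : ℂ, -(n:ℝ) < z.re → g (z+1) = z * g z) ∧
      (∀ z : ℂ, 0 < z.re → g z = Δ z) := by
    intro n
    induction n with
    | zero => exact ⟨Δ, by simpa using hΔd, by simpa using hΔrec, fun z _ => rfl⟩
    | succ n ih =>
      obtain ⟨g, hg1, hg2, hg3⟩ := ih
      have hg4 : g 1 = 0 := by rw [hg3 1 (by norm_num), hΔ1]
      obtain ⟨G, hG1, hG2, hG3⟩ := wielandt_step n g hg1 hg2 hg4
      have hcast : ((n+1:ℕ):ℝ) = (n:ℝ)+1 := by push_cast; ring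
      refine ⟨G, by rw [hcast]; exact hG1, by rw [hcast]; exact hG2, fun z hz => ?_⟩
      rw [hG3 z (by have := n.cast_nonneg (α := ℝ); linarith), hg3 z hz]
  choose Dn hDn using hGood
  have hUo : ∀ a : ℝ, IsOpen {z : ℂ | a < z.re} := fun a =>
    isOpen_lt continuous_const Complex.continuous_re
  have hmono : ∀ m n : ℕ, m ≤ n → ∀ z : ℂ, -(m:ℝ) < z.re → Dn m z = Dn n z := by
    intro m n hmn
    have hsub : {z : ℂ | -(m:ℝ) < z.re} ⊆ {z : ℂ | -(n:ℝ) < z.re} := by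
      intro z hz
      simp only [mem_setOf_eq] at hz ⊢
      have : (m:ℝ) ≤ n := by exact_mod_cast hmn
      linarith
    have hpre : IsPreconnected {z : ℂ | -(m:ℝ) < z.re} := (convex_halfSpace_re_gt _).isPreconnected
    have ha1 : AnalyticOnNhd ℂ (Dn m) {z : ℂ | -(m:ℝ) < z.re} := (hDn m).1.analyticOnNhd (hUo _)
    have ha2 : AnalyticOnNhd ℂ (Dn n) {z : ℂ | -(m:ℝ) < z.re} :=
      ((hDn n).1.mono hsub).analyticOnNhd (hUo _)
    have h1mem : (1:ℂ) ∈ {z : ℂ | -(m:ℝ) < z.re} := by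
      simp only [mem_setOf_eq, Complex.one_re]
      have := m.cast_nonneg (α := ℝ); linarith
    have hev : Dn m =ᶠ[𝓝 (1:ℂ)] Dn n := by
      filter_upwards [(hUo 0).mem_nhds (by simp : (1:ℂ) ∈ {z : ℂ | 0 < z.re})] with w hw
      rw [(hDn m).2.2 w hw, (hDn n).2.2 w hw]
    exact fun z hz => ha1.eqOn_of_preconnected_of_eventuallyEq ha2 hpre h1mem hev hz
  set D : ℂ → ℂ := fun z => Dn (⌊z.re⌋.natAbs + 1) z with hD
  have hidx : ∀ z : ℂ, -((⌊z.re⌋.natAbs + 1 : ℕ):ℝ) < z.re := by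
    intro z
    have h1 : ((⌊z.re⌋ : ℝ)) ≤ z.re := Int.floor_le _
    have h0 : -((⌊z.re⌋.natAbs : ℤ)) ≤ ⌊z.re⌋ := by
      rw [← Int.abs_eq_natAbs]; exact neg_abs_le _
    have h2 : -((⌊z.re⌋.natAbs : ℝ)) ≤ ((⌊z.re⌋ : ℤ) : ℝ) := by exact_mod_cast h0
    simp only [Nat.cast_add, Nat.cast_one]
    linarith
  have hkey : ∀ (n : ℕ) (z : ℂ), -(n:ℝ) < z.re → D z = Dn n z := by
    intro n z hz
    rcases le_total (⌊z.re⌋.natAbs + 1) n with h | h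
    · exact hmono _ n h z (hidx z)
    · exact (hmono n _ h z hz).symm
  refine ⟨D, ?_, ?_, ?_⟩
  · intro z
    set n := ⌊z.re⌋.natAbs + 1 with hn
    have hmem : {w : ℂ | -(n:ℝ) < w.re} ∈ 𝓝 z := (hUo _).mem_nhds (hidx z)
    have heq : D =ᶠ[𝓝 z] Dn n := by
      filter_upwards [hmem] with w hw
      exact hkey n w hw
    exact ((hDn n).1.differentiableAt hmem).congr_of_eventuallyEq heq
  · intro z
    set n := ⌊z.re⌋.natAbs + 1 with hn
    have hz1 : -(n:ℝ) < (z+1).re := by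
      have := hidx z
      simp only [Complex.add_re, Complex.one_re]
      linarith
    rw [hkey n (z+1) hz1, hkey n z (hidx z)]
    exact (hDn n).2.1 z (hidx z)
  · intro z hz
    have h1 : -((1:ℕ):ℝ) < z.re := by
      push_cast; linarith
    rw [hkey 1 z h1]
    exact (hDn 1).2.2 z hz

theorem wielandt (f : ℂ → ℂ) (hd : DifferentiableOn ℂ f {z | 0 < z.re})
    (hb : ∃ C : ℝ, ∀ z : ℂ, 1 ≤ z.re → z.re ≤ 2 → ‖f z‖ ≤ C)
    (hrec : ∀ z : ℂ, 0 < z.re → f (z + 1) = z * f z) (h1 : f 1 = 1) :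
    ∀ z : ℂ, 0 < z.re → f z = Complex.Gamma z := by
  obtain ⟨C, hC⟩ := hb
  obtain ⟨B, hB⟩ := wielandt_gamma_strip
  -- the difference function
  set Δ : ℂ → ℂ := fun z => f z - Complex.Gamma z with hΔ
  have hne : ∀ z : ℂ, 0 < z.re → z ≠ 0 := by
    intro z hz h; rw [h] at hz; simp at hz
  have hΔd : DifferentiableOn ℂ Δ {z : ℂ | 0 < z.re} := by
    apply hd.sub
    intro z hz
    refine (Complex.differentiableAt_Gamma z fun m => ?_).differentiableWithinAt
    intro h
    rw [h] at hz
    simp only [mem_setOf_eq, Complex.neg_re, Complex.natCast_re] at hz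
    have := m.cast_nonneg (α := ℝ); linarith
  have hΔrec : ∀ z : ℂ, 0 < z.re → Δ (z+1) = z * Δ z := by
    intro z hz
    simp only [hΔ]
    rw [hrec z hz, Complex.Gamma_add_one z (hne z hz)]
    ring
  have hΔ1 : Δ 1 = 0 := by simp [hΔ, h1, Complex.Gamma_one]
  obtain ⟨D, hDdiff, hDrec, hDΔ⟩ := wielandt_family Δ hΔd hΔrec hΔ1
  -- bound for D on the strip
  set C₁ : ℝ := max 1 (C + B) with hC₁
  have hC₁pos : (0:ℝ) < C₁ := lt_of_lt_of_le one_pos (le_max_left _ _)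
  have hDb : ∀ z : ℂ, 1 ≤ z.re → z.re ≤ 2 → ‖D z‖ ≤ C₁ := by
    intro z h1' h2'
    have h0 : 0 < z.re := lt_of_lt_of_le one_pos h1'
    rw [hDΔ z h0]
    calc ‖f z - Complex.Gamma z‖ ≤ ‖f z‖ + ‖Complex.Gamma z‖ := norm_sub_le _ _
      _ ≤ C + B := add_le_add (hC z h1' h2') (hB z h1' h2')
      _ ≤ C₁ := le_max_right _ _
  -- the auxiliary function V
  set V : ℂ → ℂ := fun z => D z * D (1 - z) with hV
  have hVdiff : Differentiable ℂ V :=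
    hDdiff.mul (hDdiff.comp ((differentiable_const (1:ℂ)).sub differentiable_id))
  have hVrec : ∀ z : ℂ, V (z + 1) = -V z := by
    intro z
    have e1 := hDrec z
    have e2 := hDrec (-z)
    simp only [hV]
    rw [show (1:ℂ) - (z+1) = -z by ring, e1, show (1:ℂ) - z = -z + 1 by ring, e2]
    ring
  have hVnat : ∀ (z : ℂ) (n : ℕ), ‖V (z + n)‖ = ‖V z‖ := by
    intro z n
    induction n with
    | zero => simp
    | succ n ih =>
      rw [show z + ((n:ℕ)+1:ℕ) = (z + n) + 1 by push_cast; ring, hVrec, norm_neg, ih]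
  -- compact rectangle bound
  have hK : IsCompact {z : ℂ | 1 ≤ z.re ∧ z.re ≤ 2 ∧ |z.im| ≤ 1} := by
    have heq : {z : ℂ | 1 ≤ z.re ∧ z.re ≤ 2 ∧ |z.im| ≤ 1} =
        (fun p : ℝ × ℝ => (p.1 : ℂ) + p.2 * I) '' (Icc 1 2 ×ˢ Icc (-1) 1) := by
      ext z
      constructor
      · rintro ⟨h1', h2', h3'⟩
        exact ⟨(z.re, z.im), ⟨⟨h1', h2'⟩, abs_le.1 h3'⟩, by simp [Complex.ext_iff]⟩
      · rintro ⟨⟨a, b⟩, ⟨⟨ha1, ha2⟩, hb'⟩, rfl⟩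
        constructor
        · simpa using ha1
        constructor
        · simpa using ha2
        · simp only [Complex.add_im, Complex.ofReal_im, Complex.mul_im, Complex.ofReal_re,
            Complex.I_im, Complex.I_re, mul_zero, mul_one, zero_add]
          exact abs_le.2 (by simpa using hb')
    rw [heq]
    exact (isCompact_Icc.prod isCompact_Icc).image (by continuity)
  obtain ⟨M₀, hM₀⟩ := hK.exists_bound_of_continuousOn hVdiff.continuous.continuousOn
  set M : ℝ := max M₀ (C₁ * C₁) with hM
  -- V bounded on the strip
  have hstrip : ∀ z : ℂ, 1 ≤ z.re → z.re ≤ 2 → ‖V z‖ ≤ M := by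
    intro z h1' h2'
    rcases le_or_gt |z.im| 1 with him | him
    · exact le_trans (hM₀ z ⟨h1', h2', him⟩) (le_max_left _ _)
    · have hd1 : ‖D z‖ ≤ C₁ := hDb z h1' h2'
      have h3 : ‖D (3 - z)‖ ≤ C₁ := by
        apply hDb <;> simp only [Complex.sub_re, Complex.ofReal_re] <;> norm_num <;> linarith
      have heq : D (3 - z) = (2 - z) * ((1 - z) * D (1 - z)) := by
        have e1 : D ((1-z)+1) = (1-z) * D (1-z) := hDrec _
        have e2 : D ((2-z)+1) = (2-z) * D (2-z) := hDrec _
        rw [show (3:ℂ) - z = (2-z)+1 by ring, e2, show (2:ℂ) - z = (1-z)+1 by ring, e1]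
      have ha1 : 1 ≤ ‖(1:ℂ) - z‖ := by
        refine le_trans ?_ (Complex.abs_im_le_norm _)
        simp only [Complex.sub_im, Complex.one_im, zero_sub, abs_neg]
        linarith
      have ha2 : 1 ≤ ‖(2:ℂ) - z‖ := by
        refine le_trans ?_ (Complex.abs_im_le_norm _)
        simp only [Complex.sub_im, zero_sub, abs_neg]
        norm_num
        linarith
      have h5 : ‖(2:ℂ) - z‖ * (‖(1:ℂ) - z‖ * ‖D (1 - z)‖) ≤ C₁ := by
        rw [← norm_mul, ← norm_mul, ← heq]; exact h3
      have h6 : ‖D (1 - z)‖ ≤ C₁ := by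
        have t1 : ‖D (1 - z)‖ ≤ ‖(1:ℂ) - z‖ * ‖D (1 - z)‖ :=
          le_mul_of_one_le_left (norm_nonneg _) ha1
        have t2 : ‖(1:ℂ) - z‖ * ‖D (1 - z)‖ ≤ ‖(2:ℂ) - z‖ * (‖(1:ℂ) - z‖ * ‖D (1 - z)‖) :=
          le_mul_of_one_le_left (by positivity) ha2
        linarith
      calc ‖V z‖ = ‖D z‖ * ‖D (1 - z)‖ := norm_mul _ _
        _ ≤ C₁ * C₁ := mul_le_mul hd1 h6 (norm_nonneg _) hC₁pos.le
        _ ≤ M := le_max_right _ _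
  -- V bounded globally
  have hVglobal : ∀ z : ℂ, ‖V z‖ ≤ M := by
    intro z
    set k : ℤ := 1 - ⌊z.re⌋ with hk
    have hfl1 : ((⌊z.re⌋ : ℝ)) ≤ z.re := Int.floor_le _
    have hfl2 : z.re < ((⌊z.re⌋ : ℝ)) + 1 := Int.lt_floor_add_one _
    have hre : (z + (k:ℂ)).re = z.re + ((1:ℝ) - (⌊z.re⌋:ℝ)) := by
      rw [hk]
      simp only [Complex.add_re, Complex.intCast_re]
      push_cast
      ring
    have hw1 : 1 ≤ (z + (k:ℂ)).re := by rw [hre]; linarith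
    have hw2 : (z + (k:ℂ)).re ≤ 2 := by rw [hre]; linarith
    have heqn : ‖V (z + (k:ℂ))‖ = ‖V z‖ := by
      rcases le_or_gt 0 k with hkk | hkk
      · have hcast : ((k.toNat : ℕ) : ℂ) = (k : ℂ) := by
          exact_mod_cast congrArg (Int.cast : ℤ → ℂ) (Int.toNat_of_nonneg hkk)
        rw [← hcast]
        exact hVnat z k.toNat
      · have hcast : (((-k).toNat : ℕ) : ℂ) = (-k : ℂ) := by
          exact_mod_cast congrArg (Int.cast : ℤ → ℂ) (Int.toNat_of_nonneg (by omega))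
        have hzz : z = (z + (k:ℂ)) + (((-k).toNat : ℕ) : ℂ) := by rw [hcast]; ring
        conv_rhs => rw [hzz]
        rw [hVnat (z + (k:ℂ)) (-k).toNat]
    rw [← heqn]
    exact hstrip _ hw1 hw2
  -- Liouville
  have hbdd : Bornology.IsBounded (Set.range V) :=
    (Metric.isBounded_closedBall (x := (0:ℂ)) (r := M)).subset
      (by rintro _ ⟨z, rfl⟩; exact mem_closedBall_zero_iff.2 (hVglobal z))
  have hD1 : D 1 = 0 := by rw [hDΔ 1 (by norm_num), hΔ1]
  have hV0 : ∀ z : ℂ, V z = 0 := by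
    intro z
    have := hVdiff.apply_eq_apply_of_bounded hbdd z 1
    rw [this]
    simp [hV, hD1]
  -- identity principle step
  have hDan : AnalyticOnNhd ℂ D univ := hDdiff.differentiableOn.analyticOnNhd isOpen_univ
  have haux : ∀ a b : ℂ, b ≠ 0 →
      {t : ℝ | t ∈ Icc (0:ℝ) 1 ∧ D (a + b * t) = 0}.Infinite → ∀ z : ℂ, D z = 0 := by
    intro a b hb0 hinf z
    set φ : ℝ → ℂ := fun t => a + b * t with hφ
    have hφc : Continuous φ :=
      continuous_const.add (continuous_const.mul Complex.continuous_ofReal)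
    have hinj : Function.Injective φ := by
      intro s t h
      have h' : a + b * (s:ℂ) = a + b * (t:ℂ) := h
      have := mul_left_cancel₀ hb0 (add_left_cancel h')
      exact_mod_cast this
    have himg : (φ '' {t : ℝ | t ∈ Icc (0:ℝ) 1 ∧ D (φ t) = 0}).Infinite :=
      hinf.image hinj.injOn
    have hsub : φ '' {t : ℝ | t ∈ Icc (0:ℝ) 1 ∧ D (φ t) = 0} ⊆ φ '' (Icc 0 1) :=
      Set.image_mono (fun t ht => ht.1)
    obtain ⟨x, -, hx⟩ := himg.exists_accPt_of_subset_isCompact (isCompact_Icc.image hφc) hsub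
    have hsubset : φ '' {t : ℝ | t ∈ Icc (0:ℝ) 1 ∧ D (φ t) = 0} ⊆ {w : ℂ | D w = 0} := by
      rintro _ ⟨t, ⟨-, ht⟩, rfl⟩; exact ht
    have hfreq : ∃ᶠ w in 𝓝[≠] x, D w = 0 := by
      rw [Filter.frequently_iff_neBot]
      exact hx.mono (principal_mono.2 hsubset)
    exact hDan.eqOn_zero_of_preconnected_of_frequently_eq_zero isPreconnected_univ (mem_univ x)
      hfreq (mem_univ z)
  -- split the zero set
  have hDzero : ∀ z : ℂ, D z = 0 := by
    have hcover : ∀ t : ℝ, t ∈ Icc (0:ℝ) 1 →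
        D ((1:ℂ)/2 + 1 * t) = 0 ∨ D ((1:ℂ)/2 + (-1) * t) = 0 := by
      intro t ht
      have h0 := hV0 ((1:ℂ)/2 + t)
      simp only [hV] at h0
      rcases mul_eq_zero.1 h0 with h | h
      · left; rw [show (1:ℂ)/2 + 1*t = 1/2 + t by ring]; exact h
      · right; rw [show (1:ℂ)/2 + (-1)*t = 1 - (1/2 + t) by ring]; exact h
    have hunion : Icc (0:ℝ) 1 ⊆
        {t : ℝ | t ∈ Icc (0:ℝ) 1 ∧ D ((1:ℂ)/2 + 1 * t) = 0} ∪
        {t : ℝ | t ∈ Icc (0:ℝ) 1 ∧ D ((1:ℂ)/2 + (-1) * t) = 0} :=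
      fun t ht => (hcover t ht).imp (fun h => ⟨ht, h⟩) (fun h => ⟨ht, h⟩)
    have hinf : ({t : ℝ | t ∈ Icc (0:ℝ) 1 ∧ D ((1:ℂ)/2 + 1 * t) = 0} ∪
        {t : ℝ | t ∈ Icc (0:ℝ) 1 ∧ D ((1:ℂ)/2 + (-1) * t) = 0}).Infinite :=
      (Set.Icc_infinite (by norm_num)).mono hunion
    rcases Set.infinite_union.1 hinf with h | h
    · exact haux (1/2) 1 one_ne_zero h
    · exact haux (1/2) (-1) (by norm_num) h
  intro z hz
  have := hDΔ z hz
  rw [hDzero z] at this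
  have h0 : f z - Complex.Gamma z = 0 := this.symm
  exact sub_eq_zero.1 h0
end

section
/- If f : (0,∞) → (0,∞) satisfies f(x+1) = x f(x) for all x > 0, f(1) = 1, and lim_{n→∞} f(x+n) / ((n-1)! · n^x) = 1 for every x > 0, then f = Γ on (0,∞). -/
open Filter

theorem weierstrass_uniqueness (f : ℝ → ℝ) (hpos : ∀ x > 0, 0 < f x) (h1 : f 1 = 1)
    (hrec : ∀ x > 0, f (x + 1) = x * f x)
    (hlim : ∀ x > 0, Tendsto (fun n : ℕ => f (x + n) / ((Nat.factorial (n - 1) : ℝ) * (n : ℝ) ^ x))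
      atTop (nhds 1)) :
    ∀ x > 0, f x = Real.Gamma x := by
  intro x hx
  have hprod : ∀ n : ℕ, f (x + n) = f x * ∏ i ∈ Finset.range n, (x + i) := by
    intro n
    induction n with
    | zero => simp
    | succ n ih =>
      have hxn : (0:ℝ) < x + n := by positivity
      have : f (x + (n + 1)) = (x + n) * f (x + n) := by
        have := hrec (x + n) hxn
        rw [← this]; ring_nf
      rw [Nat.cast_succ, this, ih, Finset.prod_range_succ]; ring
  -- key: f x * (n / (n + x)) tends to both f x and Γ x
  have key : Tendsto (fun n : ℕ => f x * ((n : ℝ) / ((n : ℝ) + x))) atTop (nhds (Real.Gamma x)) := by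
    have h2 := (hlim x hx).mul (Real.GammaSeq_tendsto_Gamma x)
    rw [one_mul] at h2
    refine h2.congr' ?_
    filter_upwards [eventually_ge_atTop 1] with n hn
    have hn0 : (0:ℝ) < (n:ℝ) := by exact_mod_cast hn
    have hfac : ((n - 1).factorial : ℝ) ≠ 0 := by positivity
    have hnx : (0:ℝ) < (n:ℝ) ^ x := Real.rpow_pos_of_pos hn0 x
    have hprodpos : (0:ℝ) < ∏ i ∈ Finset.range n, (x + i) := by
      apply Finset.prod_pos; intro i _; positivity
    have hfacn : (n.factorial : ℝ) = n * (n - 1).factorial := by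
      rw [← Nat.mul_factorial_pred (by omega : n ≠ 0)]
      push_cast
      ring
    rw [hprod n, Real.GammaSeq, Finset.prod_range_succ]
    field_simp
    rw [hfacn]
    push_cast
    ring
  have key2 : Tendsto (fun n : ℕ => f x * ((n : ℝ) / ((n : ℝ) + x))) atTop (nhds (f x)) := by
    have := (tendsto_natCast_div_add_atTop (x : ℝ)).const_mul (f x)
    simpa using this
  exact tendsto_nhds_unique key2 key
end

section
/- The Prym function e·P(s) (with P(s) = ∑_{n=0}^∞ (−1)^n/(n!(s+n))) satisfies e·P(s) = 1/s + 1/(s(s+1)) + 1/(s(s+1)(s+2)) + ⋯ = ∑_{k=0}^∞ 1/(s(s+1)⋯(s+k)) for Re s > 0. -/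
/-- The Prym function. -/
noncomputable def prym (s : ℂ) : ℂ := ∑' n : ℕ, (-1) ^ n / ((Nat.factorial n : ℂ) * (s + n))

private lemma aux_ne {s : ℂ} (hs : 0 < s.re) (j : ℕ) : s + (j : ℂ) ≠ 0 := by
  intro h
  have : (s + (j : ℂ)).re = 0 := by rw [h]; simp
  simp only [Complex.add_re, Complex.natCast_re] at this
  have : (0:ℝ) ≤ (j:ℝ) := Nat.cast_nonneg j
  linarith [Complex.add_re s j, Complex.natCast_re j]

private lemma key_identity : ∀ (k : ℕ) (s : ℂ), 0 < s.re →
    ∑ n ∈ Finset.range (k + 1), (-1 : ℂ) ^ n * (k.choose n : ℂ) / (s + n)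
      = (k.factorial : ℂ) * ∏ j ∈ Finset.range (k + 1), (s + j)⁻¹ := by
  intro k
  induction k with
  | zero =>
    intro s hs
    simp
  | succ k ih =>
    intro s hs
    have hs1 : 0 < (s + 1).re := by simp [Complex.add_re]; linarith
    -- Pascal recurrence: F s (k+1) = F s k - F (s+1) k
    have hpas : ∑ n ∈ Finset.range (k + 2), (-1 : ℂ) ^ n * ((k+1).choose n : ℂ) / (s + n)
        = (∑ n ∈ Finset.range (k + 1), (-1 : ℂ) ^ n * (k.choose n : ℂ) / (s + n))
          - ∑ n ∈ Finset.range (k + 1), (-1 : ℂ) ^ n * (k.choose n : ℂ) / ((s + 1) + n) := by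
      rw [Finset.sum_range_succ' (fun n => (-1 : ℂ) ^ n * ((k+1).choose n : ℂ) / (s + n)) (k+1)]
      rw [Finset.sum_range_succ' (fun n => (-1 : ℂ) ^ n * (k.choose n : ℂ) / (s + n)) k]
      have h1 : ∀ m ∈ Finset.range (k+1),
          (-1 : ℂ) ^ (m+1) * ((k+1).choose (m+1) : ℂ) / (s + (m+1 : ℕ))
          = (-1 : ℂ) ^ (m+1) * (k.choose m : ℂ) / (s + (m+1 : ℕ))
            + (-1 : ℂ) ^ (m+1) * (k.choose (m+1) : ℂ) / (s + (m+1 : ℕ)) := by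
        intro m _
        rw [Nat.choose_succ_succ]
        push_cast
        ring
      rw [Finset.sum_congr rfl h1, Finset.sum_add_distrib]
      have h2 : ∑ m ∈ Finset.range (k+1),
          (-1 : ℂ) ^ (m+1) * (k.choose m : ℂ) / (s + (m+1 : ℕ))
          = - ∑ n ∈ Finset.range (k + 1), (-1 : ℂ) ^ n * (k.choose n : ℂ) / ((s + 1) + n) := by
        rw [← Finset.sum_neg_distrib]
        refine Finset.sum_congr rfl fun m _ => ?_
        have : (s + ((m:ℂ)+1)) = (s + 1) + m := by ring
        push_cast
        rw [this]
        ring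
      have h3 : ∑ m ∈ Finset.range (k+1),
          (-1 : ℂ) ^ (m+1) * (k.choose (m+1) : ℂ) / (s + (m+1 : ℕ))
          = ∑ m ∈ Finset.range k,
          (-1 : ℂ) ^ (m+1) * (k.choose (m+1) : ℂ) / (s + (m+1 : ℕ)) := by
        rw [Finset.sum_range_succ]
        simp [Nat.choose_succ_self]
      rw [h2, h3]
      simp only [Nat.choose_zero_right]
      push_cast
      ring
    rw [hpas, ih s hs, ih (s+1) hs1]
    -- now manipulate the products
    set Q : ℂ := ∏ j ∈ Finset.range (k + 2), (s + j)⁻¹ with hQ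
    have hne : ∀ j : ℕ, s + (j:ℂ) ≠ 0 := aux_ne hs
    have hkne : s + ((k:ℂ)+1) ≠ 0 := by
      have := hne (k+1); push_cast at this; exact this
    have hsne : s ≠ 0 := by have := hne 0; simpa using this
    have hQ2 : Q = (∏ j ∈ Finset.range (k + 1), (s + j)⁻¹) * (s + ((k:ℂ)+1))⁻¹ := by
      rw [hQ, Finset.prod_range_succ]
      push_cast
      ring
    have e1 : ∏ j ∈ Finset.range (k + 1), (s + j)⁻¹ = (s + ((k:ℂ)+1)) * Q := by
      rw [hQ2, mul_comm (∏ j ∈ Finset.range (k+1), (s + (j:ℂ))⁻¹) _, ← mul_assoc,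
        mul_inv_cancel₀ hkne, one_mul]
    have hQ3 : Q = (∏ j ∈ Finset.range (k + 1), ((s + 1) + j)⁻¹) * s⁻¹ := by
      rw [hQ, Finset.prod_range_succ' (fun j => (s + (j:ℕ))⁻¹) (k+1)]
      simp only [Nat.cast_zero, add_zero]
      congr 1
      refine Finset.prod_congr rfl fun j _ => ?_
      congr 1
      push_cast
      ring
    have e2 : ∏ j ∈ Finset.range (k + 1), ((s + 1) + j)⁻¹ = s * Q := by
      rw [hQ3, mul_comm (∏ j ∈ Finset.range (k+1), ((s+1) + (j:ℂ))⁻¹) _, ← mul_assoc,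
        mul_inv_cancel₀ hsne, one_mul]
    rw [e1, e2]
    rw [Nat.factorial_succ]
    push_cast
    ring

private lemma summable_norm_inv_factorial :
    Summable fun n : ℕ => ((n.factorial : ℝ))⁻¹ := by
  have := Real.summable_pow_div_factorial 1
  simpa [one_div] using this

theorem e_mul_prym_eq_series (s : ℂ) (hs : 0 < s.re) :
    (Real.exp 1 : ℂ) * prym s = ∑' k : ℕ, ∏ j ∈ Finset.range (k + 1), (s + j)⁻¹ := by
  have hne : ∀ j : ℕ, s + (j:ℂ) ≠ 0 := aux_ne hs
  set f : ℕ → ℂ := fun n => ((n.factorial : ℂ))⁻¹ with hf_def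
  set g : ℕ → ℂ := fun n => (-1) ^ n / ((n.factorial : ℂ) * (s + n)) with hg_def
  have hexp : (Real.exp 1 : ℂ) = ∑' n : ℕ, f n := by
    rw [Complex.ofReal_exp, Complex.ofReal_one, Complex.exp_eq_exp_ℂ,
      NormedSpace.exp_eq_tsum_div]
    simp [hf_def, one_div]
  have hf : Summable fun n => ‖f n‖ := by
    simpa [hf_def, Complex.norm_natCast] using summable_norm_inv_factorial
  have hg : Summable fun n => ‖g n‖ := by
    apply Summable.of_nonneg_of_le (fun n => norm_nonneg _)
      (fun n => ?_) ((summable_norm_inv_factorial).mul_left (s.re)⁻¹)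
    have h1 : s.re ≤ ‖s + (n:ℂ)‖ := by
      calc s.re ≤ (s + (n:ℂ)).re := by
            simp only [Complex.add_re, Complex.natCast_re]
            have : (0:ℝ) ≤ (n:ℝ) := Nat.cast_nonneg n
            linarith
        _ ≤ |(s + (n:ℂ)).re| := le_abs_self _
        _ ≤ ‖s + (n:ℂ)‖ := Complex.abs_re_le_norm _
    have hfacpos : (0:ℝ) < (n.factorial : ℝ) := by exact_mod_cast n.factorial_pos
    have hnorm : ‖g n‖ = ((n.factorial : ℝ))⁻¹ * ‖s + (n:ℂ)‖⁻¹ := by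
      simp [hg_def, norm_div, norm_mul, Complex.norm_natCast, mul_inv]
      ring
    rw [hnorm, mul_comm ((s.re)⁻¹) _]
    apply mul_le_mul_of_nonneg_left _ (by positivity)
    exact inv_anti₀ hs h1
  have hprym : prym s = ∑' n, g n := rfl
  rw [hexp, hprym, tsum_mul_tsum_eq_tsum_sum_range_of_summable_norm hf hg]
  refine tsum_congr fun n => ?_
  -- reflect the sum
  have hrefl : ∑ k ∈ Finset.range (n + 1), f k * g (n - k)
      = ∑ k ∈ Finset.range (n + 1), f (n - k) * g k := by
    rw [← Finset.sum_range_reflect (fun k => f k * g (n - k)) (n+1)]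
    refine Finset.sum_congr rfl fun k hk => ?_
    have hk' : k ≤ n := Nat.lt_succ_iff.mp (Finset.mem_range.mp hk)
    simp only [Nat.add_sub_cancel]
    rw [Nat.sub_sub_self hk']
  rw [hrefl]
  have hterm : ∀ k ∈ Finset.range (n + 1),
      f (n - k) * g k = ((n.factorial : ℂ))⁻¹ * ((-1 : ℂ) ^ k * (n.choose k : ℂ) / (s + k)) := by
    intro k hk
    have hk' : k ≤ n := Nat.lt_succ_iff.mp (Finset.mem_range.mp hk)
    have hfac : ((n.choose k : ℂ)) * (k.factorial : ℂ) * ((n - k).factorial : ℂ)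
        = (n.factorial : ℂ) := by exact_mod_cast Nat.choose_mul_factorial_mul_factorial hk'
    have h1 : ((n - k).factorial : ℂ) ≠ 0 := by exact_mod_cast (n-k).factorial_ne_zero
    have h2 : ((k).factorial : ℂ) ≠ 0 := by exact_mod_cast k.factorial_ne_zero
    have h3 : ((n).factorial : ℂ) ≠ 0 := by exact_mod_cast n.factorial_ne_zero
    have h4 : s + (k:ℂ) ≠ 0 := hne k
    simp only [hf_def, hg_def]
    field_simp
    linear_combination (-1:ℂ) * hfac
  rw [Finset.sum_congr rfl hterm, ← Finset.mul_sum, key_identity n s hs, ← mul_assoc,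
    inv_mul_cancel₀ (by exact_mod_cast n.factorial_ne_zero), one_mul]
end

section
/- The Davis pseudo-Gamma function Γ_S (as defined by Γ_S(s)=1/s on (0,1], Γ_S=1 on [1,2], and Γ_S(s)=∏_{j=1}^{k−1}(s−j) on [k,k+1] for k ≥ 2) is continuous and convex on (0,∞) but is not equal to Γ; in particular it is not log-convex. -/
open Set Finset Topology Filter

/-- Davis's pseudo-Gamma function. -/
noncomputable def davisGamma (s : ℝ) : ℝ :=
  if s ≤ 1 then 1 / s else ∏ j ∈ Finset.range (⌊s⌋₊ - 1), (s - (j + 1))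

noncomputable def dP (k : ℕ) (s : ℝ) : ℝ := ∏ j ∈ Finset.range k, (s - (j + 1))

lemma dP_succ (k : ℕ) (s : ℝ) : dP (k + 1) s = dP k s * (s - (k + 1)) := by
  rw [dP, dP, Finset.prod_range_succ]

lemma davisGamma_of_le_one {s : ℝ} (h : s ≤ 1) : davisGamma s = 1 / s := if_pos h

lemma davisGamma_eq_dP (k : ℕ) {s : ℝ} (h1 : (k : ℝ) + 1 ≤ s) (h2 : s ≤ (k : ℝ) + 2) :
    davisGamma s = dP k s := by
  rcases le_or_gt s 1 with hs | hs
  · have hk : k = 0 := by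
      have h0 : (k : ℝ) ≤ 0 := by linarith
      exact_mod_cast le_antisymm (by exact_mod_cast h0) (Nat.zero_le k)
    subst hk
    have : s = 1 := le_antisymm hs (by linarith)
    subst this
    simp [davisGamma, dP]
  · rw [davisGamma, if_neg (not_le.mpr hs)]
    rcases eq_or_lt_of_le h2 with heq | hlt
    · have hfl : ⌊s⌋₊ = k + 2 := by
        rw [Nat.floor_eq_iff (by linarith)]
        push_cast
        constructor <;> linarith
      rw [hfl, show k + 2 - 1 = k + 1 from rfl, Finset.prod_range_succ]
      have hone : s - ((k : ℝ) + 1) = 1 := by rw [heq]; ring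
      rw [hone, mul_one, dP]
    · have hfl : ⌊s⌋₊ = k + 1 := by
        rw [Nat.floor_eq_iff (by linarith)]
        push_cast
        constructor <;> linarith
      rw [hfl, show k + 1 - 1 = k from rfl, dP]

noncomputable def dD : ℕ → ℝ → ℝ
  | 0, _ => 0
  | (k+1), s => dD k s * (s - (k + 1)) + dP k s

lemma dP_hasDerivAt (k : ℕ) (s : ℝ) : HasDerivAt (dP k) (dD k s) s := by
  induction k with
  | zero =>
    have h : dP 0 = fun _ : ℝ => (1:ℝ) := by funext t; simp [dP]
    rw [h, show dD 0 s = 0 from rfl]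
    exact hasDerivAt_const s 1
  | succ k ih =>
    have h : dP (k+1) = fun t : ℝ => dP k t * (t - (k + 1)) := by
      funext t; exact dP_succ k t
    rw [h, show dD (k+1) s = dD k s * (s - (k + 1)) + dP k s from rfl]
    have := ih.mul ((hasDerivAt_id s).sub_const ((k:ℝ)+1))
    rw [mul_one] at this; exact this

lemma dP_prop (k : ℕ) : ConvexOn ℝ (Ici ((k:ℝ)+1)) (dP k) ∧ MonotoneOn (dP k) (Ici ((k:ℝ)+1)) ∧
    ∀ s ∈ Ici ((k:ℝ)+1), (1:ℝ) ≤ dP k s := by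
  induction k with
  | zero =>
    refine ⟨(convexOn_const 1 (convex_Ici _)).congr ?_, ?_, ?_⟩
    · intro s _; simp [dP]
    · intro a _ b _ _; simp [dP]
    · intro s _; simp [dP]
  | succ k ih =>
    have hc : ((k+1:ℕ):ℝ) + 1 = ((k:ℝ)+1) + 1 := by push_cast; ring
    rw [hc]
    set S : Set ℝ := Ici (((k:ℝ)+1) + 1) with hS
    have hsub : S ⊆ Ici ((k:ℝ)+1) := Ici_subset_Ici.mpr (by linarith)
    have hf : ConvexOn ℝ S (dP k) := ih.1.subset hsub (convex_Ici _)
    have hg : ConvexOn ℝ S (fun s => s - ((k:ℝ)+1)) := by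
      refine ⟨convex_Ici _, ?_⟩
      intro x _ y _ a b ha hb hab
      simp only [smul_eq_mul]
      nlinarith
    have hmg : MonotoneOn (fun s => s - ((k:ℝ)+1)) S := by
      intro a _ b _ h; simp only; linarith
    have hf0 : ∀ ⦃x⦄, x ∈ S → 0 ≤ dP k x := fun x hx =>
      le_trans zero_le_one (ih.2.2 x (hsub hx))
    have hg0 : ∀ ⦃x⦄, x ∈ S → (0:ℝ) ≤ x - ((k:ℝ)+1) := by
      intro x hx
      have : ((k:ℝ)+1) + 1 ≤ x := hx
      linarith
    have hmf : MonotoneOn (dP k) S := ih.2.1.mono hsub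
    have hmul := hf.mul hg hf0 hg0 (hmf.monovaryOn hmg)
    refine ⟨hmul.congr ?_, ?_, ?_⟩
    · intro s _
      simp only [Pi.mul_apply]
      exact (dP_succ k s).symm
    · intro a ha b hb hab
      rw [dP_succ, dP_succ]
      
      exact mul_le_mul (hmf ha hb hab) (by linarith) (by have := hg0 ha; linarith)
        (hf0 hb)
    · intro s hs
      rw [dP_succ]
      have h1 := ih.2.2 s (hsub hs)
      have h2 := hg0 hs
      have h3 : ((k:ℝ)+1) + 1 ≤ s := hs
      
      nlinarith
lemma slope_trans {u v w fu fv fw : ℝ} (h1 : u < v) (h2 : v < w)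
    (h : (fv - fu)/(v - u) ≤ (fw - fv)/(w - v)) :
    ((fv - fu)/(v - u) ≤ (fw - fu)/(w - u)) ∧ ((fw - fu)/(w - u) ≤ (fw - fv)/(w - v)) := by
  have h1' : (0:ℝ) < v - u := by linarith
  have h2' : (0:ℝ) < w - v := by linarith
  have h3' : (0:ℝ) < w - u := by linarith
  rw [div_le_div_iff₀ h1' h2'] at h
  constructor
  · rw [div_le_div_iff₀ h1' h3']; nlinarith
  · rw [div_le_div_iff₀ h3' h2']; nlinarith

lemma convexOn_glue {f : ℝ → ℝ} {S : Set ℝ} (hS : Convex ℝ S) {b : ℝ}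
    (h1 : ConvexOn ℝ (S ∩ Iic b) f) (h2 : ConvexOn ℝ (S ∩ Ici b) f)
    (hsl : ∀ x ∈ S, ∀ z ∈ S, x < b → b < z → (f b - f x)/(b - x) ≤ (f z - f b)/(z - b)) :
    ConvexOn ℝ S f := by
  apply convexOn_of_slope_mono_adjacent hS
  intro x y z hx hz hxy hyz
  have hyS : y ∈ S := hS.ordConnected.out hx hz ⟨by linarith, by linarith⟩
  rcases le_or_gt z b with hzb | hbz
  · exact h1.slope_mono_adjacent ⟨hx, show x ≤ b by linarith⟩ ⟨hz, hzb⟩ hxy hyz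
  rcases le_or_gt b x with hbx | hxb
  · exact h2.slope_mono_adjacent ⟨hx, hbx⟩ ⟨hz, show b ≤ z by linarith⟩ hxy hyz
  have hbS : b ∈ S := hS.ordConnected.out hx hz ⟨hxb.le, hbz.le⟩
  rcases lt_trichotomy y b with hyb | rfl | hby
  · have s1 : (f y - f x)/(y - x) ≤ (f b - f y)/(b - y) :=
      h1.slope_mono_adjacent ⟨hx, hxb.le⟩ ⟨hbS, le_refl b⟩ hxy hyb
    have s2 := hsl y hyS z hz hyb hbz
    exact s1.trans ((slope_trans hyb hbz s2).1)
  · exact hsl x hx z hz hxb hbz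
  · have s2 : (f y - f b)/(y - b) ≤ (f z - f y)/(z - y) :=
      h2.slope_mono_adjacent ⟨hbS, le_refl b⟩ ⟨hz, show b ≤ z by linarith⟩ hby hyz
    have s1 := hsl x hx y hyS hxb hby
    exact ((slope_trans hxb hby s1).2).trans s2
lemma davis_left_slope (n : ℕ) (hconv : ConvexOn ℝ (Ioc (0:ℝ) ((n:ℝ)+1)) davisGamma)
    {x : ℝ} (hx0 : 0 < x) (hxb : x < (n:ℝ)+1) :
    (davisGamma ((n:ℝ)+1) - davisGamma x) / (((n:ℝ)+1) - x) ≤ dD n ((n:ℝ)+1) := by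
  cases n with
  | zero =>
    simp only [Nat.cast_zero, zero_add] at hxb ⊢
    have hfx : davisGamma x = 1 / x := davisGamma_of_le_one hxb.le
    have hf1 : davisGamma 1 = 1 := by rw [davisGamma_of_le_one le_rfl]; norm_num
    rw [hfx, hf1, show dD 0 1 = 0 from rfl]
    have hx1 : 1 - 1/x ≤ 0 := by
      rw [sub_nonpos]
      exact one_le_one_div hx0 hxb.le
    exact div_nonpos_iff.mpr (Or.inr ⟨hx1, by linarith⟩)
  | succ m =>
    have hc2 : ((m+1:ℕ):ℝ) + 1 = (m:ℝ)+2 := by push_cast; ring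
    rw [hc2] at hxb hconv ⊢
    have key : ∀ t : ℝ, (m:ℝ)+1 ≤ t → t < (m:ℝ)+2 →
        (davisGamma ((m:ℝ)+2) - davisGamma t)/(((m:ℝ)+2) - t) ≤ dD (m+1) ((m:ℝ)+2) := by
      intro t h1 h2
      have hft : davisGamma t = dP m t := davisGamma_eq_dP m h1 (by linarith)
      have hfb2 : davisGamma ((m:ℝ)+2) = dP m ((m:ℝ)+2) := davisGamma_eq_dP m (by linarith) le_rfl
      have h := (dP_prop m).1.slope_le_of_hasDerivAt (show t ∈ Ici ((m:ℝ)+1) from h1)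
        (show (m:ℝ)+2 ∈ Ici ((m:ℝ)+1) from by show (m:ℝ)+1 ≤ (m:ℝ)+2; linarith)
        h2 (dP_hasDerivAt m ((m:ℝ)+2))
      rw [slope_def_field] at h
      have hstep : dD m ((m:ℝ)+2) ≤ dD (m+1) ((m:ℝ)+2) := by
        have he : dD (m+1) ((m:ℝ)+2) = dD m ((m:ℝ)+2) * (((m:ℝ)+2) - ((m:ℝ)+1)) + dP m ((m:ℝ)+2) := rfl
        have hp := (dP_prop m).2.2 ((m:ℝ)+2) (show (m:ℝ)+2 ∈ Ici ((m:ℝ)+1) from by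
          show (m:ℝ)+1 ≤ (m:ℝ)+2; linarith)
        rw [he]; nlinarith
      rw [hft, hfb2]
      exact h.trans hstep
    rcases le_or_gt ((m:ℝ)+1) x with hge | hlt
    · exact key x hge hxb
    · have hm12 : (m:ℝ)+1 < (m:ℝ)+2 := by linarith
      have s1 : (davisGamma ((m:ℝ)+1) - davisGamma x)/(((m:ℝ)+1) - x) ≤
          (davisGamma ((m:ℝ)+2) - davisGamma ((m:ℝ)+1))/(((m:ℝ)+2) - ((m:ℝ)+1)) :=
        hconv.slope_mono_adjacent ⟨hx0, by linarith⟩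
          ⟨by have := Nat.cast_nonneg (α := ℝ) m; linarith, le_rfl⟩ hlt hm12
      exact ((slope_trans hlt hm12 s1).2).trans (key ((m:ℝ)+1) le_rfl hm12)

lemma davis_convexOn_Ioc (n : ℕ) : ConvexOn ℝ (Ioc (0:ℝ) ((n:ℝ)+1)) davisGamma := by
  induction n with
  | zero =>
    simp only [Nat.cast_zero, zero_add]
    have h := (convexOn_zpow (𝕜 := ℝ) (-1)).subset
      (fun t ht => ht.1) (convex_Ioc (0:ℝ) 1)
    refine h.congr ?_
    intro s hs
    show s ^ (-1 : ℤ) = davisGamma s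
    rw [davisGamma_of_le_one hs.2, zpow_neg, zpow_one, one_div]
  | succ n ih =>
    have hc : ((n+1:ℕ):ℝ) + 1 = (n:ℝ) + 2 := by push_cast; ring
    rw [hc]
    have hglue := convexOn_glue (f := davisGamma) (S := Ioc (0:ℝ) ((n:ℝ)+2))
      (convex_Ioc _ _) (b := (n:ℝ)+1) ?_ ?_ ?_
    · exact hglue
    · have hset : Ioc (0:ℝ) ((n:ℝ)+2) ∩ Iic ((n:ℝ)+1) = Ioc (0:ℝ) ((n:ℝ)+1) := by
        ext t
        simp only [Set.mem_inter_iff, Set.mem_Ioc, Set.mem_Iic]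
        constructor
        · rintro ⟨⟨a1, _⟩, a3⟩; exact ⟨a1, a3⟩
        · rintro ⟨a1, a2⟩; exact ⟨⟨a1, by linarith⟩, a2⟩
      rw [hset]; exact ih
    · have hset : Ioc (0:ℝ) ((n:ℝ)+2) ∩ Ici ((n:ℝ)+1) = Icc ((n:ℝ)+1) ((n:ℝ)+2) := by
        ext t
        simp only [Set.mem_inter_iff, Set.mem_Ioc, Set.mem_Icc, Set.mem_Ici]
        constructor
        · rintro ⟨⟨_, a2⟩, a3⟩; exact ⟨a3, a2⟩
        · rintro ⟨a1, a2⟩; exact ⟨⟨by have := Nat.cast_nonneg (α := ℝ) n; linarith, a2⟩, a1⟩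
      rw [hset]
      exact ((dP_prop n).1.subset Icc_subset_Ici_self (convex_Icc _ _)).congr
        (fun s hs => (davisGamma_eq_dP n hs.1 hs.2).symm)
    · intro x hx z hz hxb hbz
      have hfz : davisGamma z = dP n z := davisGamma_eq_dP n (by linarith) hz.2
      have hfb : davisGamma ((n:ℝ)+1) = dP n ((n:ℝ)+1) := davisGamma_eq_dP n le_rfl (by linarith)
      have hR : dD n ((n:ℝ)+1) ≤ (davisGamma z - davisGamma ((n:ℝ)+1)) / (z - ((n:ℝ)+1)) := by
        have h := (dP_prop n).1.le_slope_of_hasDerivAt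
          (Set.self_mem_Ici)
          (show z ∈ Ici ((n:ℝ)+1) from by show (n:ℝ)+1 ≤ z; linarith)
          hbz (dP_hasDerivAt n ((n:ℝ)+1))
        rw [slope_def_field] at h
        rw [hfz, hfb]
        exact h
      exact le_trans (davis_left_slope n ih hx.1 hxb) hR
lemma davis_convexOn : ConvexOn ℝ (Ioi (0:ℝ)) davisGamma := by
  refine ⟨convex_Ioi 0, fun x hx y hy a b ha hb hab => ?_⟩
  obtain ⟨n, hn⟩ := exists_nat_ge (max x y)
  exact (davis_convexOn_Ioc n).2
    ⟨hx, le_trans (le_max_left x y) (by linarith)⟩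
    ⟨hy, le_trans (le_max_right x y) (by linarith)⟩ ha hb hab

lemma davisGamma_one : davisGamma 1 = 1 := by
  rw [davisGamma_of_le_one le_rfl]; norm_num

lemma davisGamma_pos {y : ℝ} (hy : 0 < y) : 0 < davisGamma y := by
  rcases le_or_gt y 1 with h | h
  · rw [davisGamma_of_le_one h]; positivity
  · have h1 : 1 ≤ ⌊y⌋₊ := Nat.le_floor (by exact_mod_cast h.le)
    obtain ⟨m, hm⟩ := Nat.exists_eq_add_of_le h1
    have hfl : (⌊y⌋₊ : ℝ) ≤ y := Nat.floor_le hy.le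
    have hfl2 : y < (⌊y⌋₊ : ℝ) + 1 := Nat.lt_floor_add_one y
    rw [hm] at hfl hfl2
    push_cast at hfl hfl2
    have heq : davisGamma y = dP m y := davisGamma_eq_dP m (by linarith) (by linarith)
    rw [heq]
    have := (dP_prop m).2.2 y (show y ∈ Ici ((m:ℝ)+1) from by show (m:ℝ)+1 ≤ y; linarith)
    linarith

lemma davisGamma_rec {y : ℝ} (hy : 0 < y) : davisGamma (y + 1) = y * davisGamma y := by
  rcases le_or_gt y 1 with h | h
  · have h1 : davisGamma (y + 1) = dP 0 (y + 1) :=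
      davisGamma_eq_dP 0 (by push_cast; linarith) (by push_cast; linarith)
    rw [h1, davisGamma_of_le_one h]
    simp [dP]
    field_simp
  · have h1 : 1 ≤ ⌊y⌋₊ := Nat.le_floor (by exact_mod_cast h.le)
    obtain ⟨m, hm⟩ := Nat.exists_eq_add_of_le h1
    have hfl : (⌊y⌋₊ : ℝ) ≤ y := Nat.floor_le hy.le
    have hfl2 : y < (⌊y⌋₊ : ℝ) + 1 := Nat.lt_floor_add_one y
    rw [hm] at hfl hfl2
    push_cast at hfl hfl2
    have heqy : davisGamma y = dP m y := davisGamma_eq_dP m (by linarith) (by linarith)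
    have heqy1 : davisGamma (y + 1) = dP (m + 1) (y + 1) :=
      davisGamma_eq_dP (m + 1) (by push_cast; linarith) (by push_cast; linarith)
    rw [heqy, heqy1, dP, dP, Finset.prod_range_succ']
    push_cast
    rw [Finset.prod_congr rfl
      (show ∀ j ∈ Finset.range m, y + 1 - ((j:ℝ) + 1 + 1) = y - ((j:ℝ) + 1) from
        fun j _ => by ring)]
    rw [show y + 1 - (0 + 1) = y from by ring, mul_comm]
lemma dP_continuous (k : ℕ) : Continuous (dP k) :=
  continuous_iff_continuousAt.mpr fun s => (dP_hasDerivAt k s).differentiableAt.continuousAt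

lemma davis_continuousAt {x : ℝ} (hx : 0 < x) : ContinuousAt davisGamma x := by
  rcases lt_or_ge x 1 with h | h
  · have hmem : Ioo (0:ℝ) 1 ∈ 𝓝 x := Ioo_mem_nhds hx h
    have hcont : ContinuousAt (fun y : ℝ => 1 / y) x :=
      continuousAt_const.div continuousAt_id hx.ne'
    exact hcont.congr (Filter.eventuallyEq_of_mem hmem
      (fun y hy => (davisGamma_of_le_one hy.2.le).symm))
  · set n := ⌊x⌋₊ with hn
    have h1 : 1 ≤ n := Nat.le_floor (by exact_mod_cast h)
    obtain ⟨m, hm⟩ := Nat.exists_eq_add_of_le h1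
    have hfl : (n:ℝ) ≤ x := Nat.floor_le (by linarith)
    have hfl2 : x < (n:ℝ) + 1 := Nat.lt_floor_add_one x
    have hcast : (n:ℝ) = (m:ℝ) + 1 := by rw [hm]; push_cast; ring
    rcases eq_or_lt_of_le hfl with heq | hlt
    · -- integer point : x = n
      have hxE : x = (m:ℝ) + 1 := by rw [← heq, hcast]
      have hright : ContinuousWithinAt davisGamma (Ici x) x := by
        have hIcc : Icc x (x+1) ∈ 𝓝[Ici x] x := Icc_mem_nhdsGE_of_mem ⟨le_rfl, lt_add_one x⟩
        refine ContinuousWithinAt.congr_of_eventuallyEq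
          ((dP_continuous m).continuousWithinAt) ?_ ?_
        · exact Filter.eventuallyEq_of_mem hIcc
            (fun y hy => davisGamma_eq_dP m (by rw [hxE] at hy; exact hy.1)
              (by have := hy.2; rw [hxE] at this; linarith))
        · exact davisGamma_eq_dP m (by rw [hxE]) (by rw [hxE]; linarith)
      have hleft : ContinuousWithinAt davisGamma (Iic x) x := by
        cases m with
        | zero =>
          have hx1 : x = 1 := by rw [hxE]; norm_num
          subst hx1
          have hIoc : Ioc (0:ℝ) 1 ∈ 𝓝[Iic 1] 1 := Ioc_mem_nhdsLE_of_mem ⟨zero_lt_one, le_rfl⟩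
          have hc1 : ContinuousAt (fun y : ℝ => 1 / y) 1 :=
            continuousAt_const.div continuousAt_id one_ne_zero
          refine ContinuousWithinAt.congr_of_eventuallyEq
            (hc1.continuousWithinAt (s := Set.Iic 1)) ?_ ?_
          · exact Filter.eventuallyEq_of_mem hIoc
              (fun y hy => davisGamma_of_le_one hy.2)
          · exact davisGamma_of_le_one le_rfl
        | succ l =>
          have hxE2 : x = (l:ℝ) + 2 := by rw [hxE]; push_cast; ring
          have hIcc : Icc (x-1) x ∈ 𝓝[Iic x] x := Icc_mem_nhdsLE_of_mem ⟨by linarith, le_rfl⟩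
          refine ContinuousWithinAt.congr_of_eventuallyEq
            ((dP_continuous l).continuousWithinAt) ?_ ?_
          · exact Filter.eventuallyEq_of_mem hIcc
              (fun y hy => davisGamma_eq_dP l
                (by have := hy.1; rw [hxE2] at this; linarith)
                (by have := hy.2; rw [hxE2] at this; linarith))
          · exact davisGamma_eq_dP l (by rw [hxE2]; linarith) (by rw [hxE2])
      have := hleft.union hright
      rw [Iic_union_Ici] at this
      exact (continuousWithinAt_univ davisGamma x).mp this
    · -- non-integer
      have hmem : Ioo ((n:ℝ)) ((n:ℝ)+1) ∈ 𝓝 x := Ioo_mem_nhds hlt hfl2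
      refine ((dP_continuous m).continuousAt).congr
        (Filter.eventuallyEq_of_mem hmem (fun y hy => ?_))
      exact (davisGamma_eq_dP m (by rw [hcast] at hy; exact hy.1.le)
        (by have := hy.2; rw [hcast] at this; linarith)).symm
theorem davisGamma_convex_not_gamma :
    ContinuousOn davisGamma (Set.Ioi 0) ∧ ConvexOn ℝ (Set.Ioi 0) davisGamma ∧
      ¬(∀ s ∈ Set.Ioi (0 : ℝ), davisGamma s = Real.Gamma s) ∧
      ¬ConvexOn ℝ (Set.Ioi 0) (fun s => Real.log (davisGamma s)) := by
  have hne : ¬(∀ s ∈ Set.Ioi (0 : ℝ), davisGamma s = Real.Gamma s) := by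
    intro hall
    have h2 := hall (1/2) (by norm_num)
    rw [davisGamma_of_le_one (by norm_num), Real.Gamma_one_half_eq] at h2
    rw [show (1:ℝ)/(1/2) = 2 by norm_num] at h2
    have hpi : Real.pi < 4 := by linarith [Real.pi_lt_d2]
    have hsq : Real.sqrt Real.pi < 2 := by
      have h4 : (2:ℝ) = Real.sqrt 4 := by
        rw [show (4:ℝ) = 2^2 by norm_num, Real.sqrt_sq (by norm_num)]
      rw [h4]
      exact Real.sqrt_lt_sqrt Real.pi_pos.le hpi
    rw [← h2] at hsq
    exact lt_irrefl _ hsq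
  refine ⟨fun x hx => (davis_continuousAt hx).continuousWithinAt, davis_convexOn, hne, ?_⟩
  intro hlc
  apply hne
  intro s hs
  exact Real.eq_Gamma_of_log_convex (f := davisGamma)
    (by exact hlc) (fun {y} hy => davisGamma_rec hy)
    (fun {y} hy => davisGamma_pos hy) davisGamma_one hs
end
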